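/- In the r-partite graph G_{r,s} (r, s ≥ 2) as defined in the paper, every independent set has at most |G_{r,s}| − 2s^{r-1} vertices. -/

import Mathlib

open SimpleGraph Finset

/-- The vertex type of the `r`-partite graph `G_{r, s₁, …, s_{r-1}}` of the paper, at
"level" `k` (corresponding to `r = k + 2` vertex classes): the base graph `G_{2,s₁}` is
`K_{s₁,s₁}`, and `G_{t+1}` consists of `s_t` disjoint copies of `G_t` together with a new
class of `s_t` vertices. -/
def GVert (s : ℕ → ℕ) : ℕ → Type
  | 0 => Fin (s 1) ⊕ Fin (s 1)
  | k + 1 => (Fin (s (k + 2)) × GVert s k) ⊕ Fin (s (k + 2))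

instance GVert.fintype (s : ℕ → ℕ) : ∀ k : ℕ, Fintype (GVert s k)
  | 0 => inferInstanceAs (Fintype (Fin (s 1) ⊕ Fin (s 1)))
  | k + 1 =>
    letI := GVert.fintype s k
    inferInstanceAs (Fintype ((Fin (s (k + 2)) × GVert s k) ⊕ Fin (s (k + 2))))

/-- One-sided adjacency for `G_{r, s₁, …, s_{r-1}}`: in the base case `K_{s₁,s₁}` all pairs
across the bipartition are joined; at level `k+1`, edges inside the `p`-th copy `H_p` are
those of `G_t`, and the new vertex `x_p` is joined to all of `H_q` for `q ≠ p`. -/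
def GAdj (s : ℕ → ℕ) : (k : ℕ) → GVert s k → GVert s k → Prop
  | 0, Sum.inl _, Sum.inr _ => True
  | 0, _, _ => False
  | k + 1, Sum.inl (p, v), Sum.inl (q, w) => p = q ∧ GAdj s k v w
  | k + 1, Sum.inl (q, _), Sum.inr p => p ≠ q
  | k + 1, _, _ => False

/-- The graph `G_{r, s₁, …, s_{r-1}}` (at level `k = r - 2`), as a simple graph. -/
def GGraph (s : ℕ → ℕ) (k : ℕ) : SimpleGraph (GVert s k) where
  Adj v w := v ≠ w ∧ (GAdj s k v w ∨ GAdj s k w v)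
  symm := ⟨fun v w h => ⟨h.1.symm, h.2.symm⟩⟩
  loopless := ⟨fun v h => h.1 rfl⟩

section Aux

variable {s : ℕ}

private lemma gcard0 :
    Fintype.card (GVert (fun i => if i = 1 then 2 * s else s) 0) = 4 * s := by
  show Fintype.card (Fin (if 1 = 1 then 2 * s else s) ⊕ Fin (if 1 = 1 then 2 * s else s)) = 4 * s
  simp; ring

private lemma gcardSucc (k : ℕ) :
    Fintype.card (GVert (fun i => if i = 1 then 2 * s else s) (k + 1))
      = s * Fintype.card (GVert (fun i => if i = 1 then 2 * s else s) k) + s := by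
  show Fintype.card ((Fin (if k + 2 = 1 then 2 * s else s)
      × GVert (fun i => if i = 1 then 2 * s else s) k) ⊕ Fin (if k + 2 = 1 then 2 * s else s)) = _
  simp [Fintype.card_sum, Fintype.card_prod]

private lemma gkey (hs : 1 ≤ s) : ∀ (k : ℕ)
    (I : Finset (GVert (fun i => if i = 1 then 2 * s else s) k)),
    (∀ a ∈ I, ∀ b ∈ I, ¬ (GGraph (fun i => if i = 1 then 2 * s else s) k).Adj a b) →
    I.card + 2 * s * s ^ k ≤ Fintype.card (GVert (fun i => if i = 1 then 2 * s else s) k) := by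
  set f : ℕ → ℕ := fun i => if i = 1 then 2 * s else s with hf
  intro k
  classical
  induction k with
  | zero =>
    intro I hI
    have hcard : I.toLeft.card + I.toRight.card = I.card :=
      Finset.card_toLeft_add_card_toRight
    have hLR : I.toLeft = ∅ ∨ I.toRight = ∅ := by
      by_contra h
      push_neg at h
      obtain ⟨a, ha⟩ := h.1
      obtain ⟨b, hb⟩ := h.2
      replace ha := Finset.mem_toLeft.1 ha
      replace hb := Finset.mem_toRight.1 hb
      exact hI _ ha _ hb (And.intro Sum.inl_ne_inr (Or.inl trivial))
    have hL : I.toLeft.card ≤ 2 * s := by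
      have := Finset.card_le_univ I.toLeft
      simpa [hf] using this
    have hR : I.toRight.card ≤ 2 * s := by
      have := Finset.card_le_univ I.toRight
      simpa [hf] using this
    have hc0 : Fintype.card (GVert f 0) = 4 * s := gcard0
    have hM0 : 2 * s * s ^ 0 = 2 * s := by ring
    rcases hLR with h | h <;> rw [h] at hcard <;> simp at hcard <;> omega
  | succ k ih =>
    intro I hI
    set N := Fintype.card (GVert f k) with hN
    set M := 2 * s * s ^ k with hM
    have h0 : M ≤ N := by simpa using ih ∅ (by simp)
    set A := I.toLeft with hA
    set B := I.toRight with hB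
    have hcard : A.card + B.card = I.card := Finset.card_toLeft_add_card_toRight
    -- every element of a copy indexed by q is adjacent to the new vertex x_p for p ≠ q
    have hadj : ∀ p, Sum.inr p ∈ I → ∀ x ∈ A, x.1 = p := by
      intro p hp x hx
      replace hx : Sum.inl x ∈ I := Finset.mem_toLeft.1 hx
      by_contra hne
      exact hI _ hx _ hp (And.intro Sum.inl_ne_inr (Or.inl (fun h => hne h.symm)))
    -- each fiber of A is (essentially) an independent set in G_k
    have hfiber : ∀ p : Fin (f (k + 2)),
        (A.filter (fun x => x.1 = p)).card + M ≤ N := by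
      intro p
      set T := (A.filter (fun x => x.1 = p)).image Prod.snd with hT
      have hTcard : T.card = (A.filter (fun x => x.1 = p)).card := by
        apply Finset.card_image_of_injOn
        intro x hx y hy hxy
        simp only [Finset.mem_coe, Finset.mem_filter] at hx hy
        exact Prod.ext (hx.2.trans hy.2.symm) hxy
      have hTind : ∀ a ∈ T, ∀ b ∈ T, ¬ (GGraph f k).Adj a b := by
        intro a ha b hb hab
        rw [hT, Finset.mem_image] at ha hb
        obtain ⟨x, hx, hxa⟩ := ha
        obtain ⟨y, hy, hyb⟩ := hb
        rw [Finset.mem_filter] at hx hy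
        have hx1 : x = (p, a) := Prod.ext hx.2 hxa
        have hy1 : y = (p, b) := Prod.ext hy.2 hyb
        have hxI : Sum.inl (p, a) ∈ I := by
          have := Finset.mem_toLeft.1 hx.1; rw [hx1] at this; exact this
        have hyI : Sum.inl (p, b) ∈ I := by
          have := Finset.mem_toLeft.1 hy.1; rw [hy1] at this; exact this
        apply hI _ hxI _ hyI
        refine And.intro (fun h => hab.1 (congrArg Prod.snd (Sum.inl_injective h))) ?_
        rcases hab.2 with h | h
        · exact Or.inl ⟨rfl, h⟩
        · exact Or.inr ⟨rfl, h⟩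
      have := ih T hTind
      omega
    have hBcard : B.card ≤ s := by
      have := Finset.card_le_univ B
      have hfs : f (k + 2) = s := by simp [hf]
      simpa [hfs] using this
    have hgoal : I.card + s * M ≤ s * N + s := by
      rcases Nat.lt_or_ge B.card 2 with hb2 | hb2
      · rcases Nat.eq_zero_or_pos B.card with hb0 | hb1
        · -- B empty: sum over fibers
          have hsum : A.card = ∑ p : Fin (f (k + 2)),
              (A.filter (fun x => x.1 = p)).card :=
            Finset.card_eq_sum_card_fiberwise (by intro x _; exact Finset.mem_univ _)
          have hle : ∑ p : Fin (f (k + 2)), ((A.filter (fun x => x.1 = p)).card + M)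
              ≤ ∑ _p : Fin (f (k + 2)), N :=
            Finset.sum_le_sum (fun p _ => hfiber p)
          rw [Finset.sum_add_distrib, Finset.sum_const, Finset.sum_const] at hle
          have hfs : f (k + 2) = s := by simp [hf]
          simp only [Finset.card_univ, Fintype.card_fin, hfs, smul_eq_mul] at hle
          rw [← hsum] at hle
          have hIA : I.card = A.card := by omega
          omega
        · -- B a single vertex x_p : A is contained in the fiber of p
          obtain ⟨p, hp⟩ := Finset.card_pos.mp hb1
          have hpI : Sum.inr p ∈ I := Finset.mem_toRight.mp hp
          have hAfib : A.filter (fun x => x.1 = p) = A := by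
            apply Finset.filter_true_of_mem
            intro x hx
            exact hadj p hpI x hx
          have h1 := hfiber p
          rw [hAfib] at h1
          have h2 : s * (A.card + M) ≤ s * N := Nat.mul_le_mul_left s h1
          rw [Nat.mul_add] at h2
          have h3 : A.card ≤ s * A.card := Nat.le_mul_of_pos_left _ hs
          omega
      · -- two new vertices in I: A must be empty
        obtain ⟨p, hp, q, hq, hpq⟩ := Finset.one_lt_card.mp hb2
        have hpI : Sum.inr p ∈ I := Finset.mem_toRight.mp hp
        have hqI : Sum.inr q ∈ I := Finset.mem_toRight.mp hq
        have hA0 : A = ∅ := by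
          rw [Finset.eq_empty_iff_forall_notMem]
          intro x hx
          exact hpq ((hadj p hpI x hx).symm.trans (hadj q hqI x hx))
        have h2 : s * M ≤ s * N := Nat.mul_le_mul_left s h0
        have : I.card = B.card := by rw [hA0] at hcard; simpa using hcard.symm
        omega
    have hcs : Fintype.card (GVert f (k + 1)) = s * N + s := gcardSucc k
    have hpow : 2 * s * s ^ (k + 1) = s * M := by rw [hM]; ring
    omega

end Aux

/-- In `G_{r,s} = G_{r, 2s, s, …, s}` (`r, s ≥ 2`), every independent set
has at most `|G_{r,s}| − 2s^{r-1}` vertices. -/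
theorem independent_set_bound (r s : ℕ) (hr : 2 ≤ r) (hs : 2 ≤ s)
    (I : Finset (GVert (fun i => if i = 1 then 2 * s else s) (r - 2)))
    (hI : ∀ a ∈ I, ∀ b ∈ I, ¬ (GGraph (fun i => if i = 1 then 2 * s else s) (r - 2)).Adj a b) :
    I.card ≤ Fintype.card (GVert (fun i => if i = 1 then 2 * s else s) (r - 2))
      - 2 * s ^ (r - 1) := by
  obtain ⟨k, rfl⟩ : ∃ k, r = k + 2 := ⟨r - 2, by omega⟩
  have h : I.card + 2 * s * s ^ k
      ≤ Fintype.card (GVert (fun i => if i = 1 then 2 * s else s) (k + 2 - 2)) :=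
    gkey (s := s) (by omega) k I hI
  have hpow : 2 * s * s ^ k = 2 * s ^ (k + 2 - 1) := by
    have h1 : k + 2 - 1 = k + 1 := rfl
    rw [h1]; ring
  omega
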